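/- Let T be a tree rooted at r with a shadow-closed link set E, and let F ⊆ E be a shadows-minimal feasible cover of T. Let v ≠ r be a vertex such that the subtree T_v has exactly four leaves a, b, c, d, where a and b are the two children of a stem s ∈ T_v with twin link ab, the subtree T_v is both c-closed and d-closed, and cd ∉ E. If ab ∈ F, then Σ_{x ∈ T_v ∖ L} deg_F(x) ≥ 3. -/

import Mathlib

open scoped Classical

/-- The set of tree edges lying on a path (necessarily the unique one in a tree)
between `u` and `v`. -/
def pathEdges {V : Type*} (T : SimpleGraph V) (u v : V) : Set (Sym2 V) :=
  {e | ∃ p : T.Walk u v, p.IsPath ∧ e ∈ p.edges}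

/-- The set of vertices lying on a path between `u` and `v`. -/
def pathSupport {V : Type*} (T : SimpleGraph V) (u v : V) : Set V :=
  {w | ∃ p : T.Walk u v, p.IsPath ∧ w ∈ p.support}

/-- The link `l` covers the tree edge `e` : `e` lies on the tree path between the
endpoints of `l`. -/
def Covers {V : Type*} (T : SimpleGraph V) (l e : Sym2 V) : Prop :=
  ∃ u v, l = s(u, v) ∧ e ∈ pathEdges T u v

/-- A set `F` of links covers the tree `T` (is feasible): every edge of `T` is covered
by some link of `F`. -/
def CoversTree {V : Type*} (T : SimpleGraph V) (F : Set (Sym2 V)) : Prop :=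
  ∀ e ∈ T.edgeSet, ∃ l ∈ F, Covers T l e

/-- `x` belongs to the subtree `T_v` of `T` rooted at `r`:
`v` lies on the tree path from `x` to the root `r`. -/
def InSubtree {V : Type*} (T : SimpleGraph V) (r v x : V) : Prop :=
  v ∈ pathSupport T x r

/-- A leaf is a vertex with exactly one neighbour (degree one). -/
def IsLeaf {V : Type*} (T : SimpleGraph V) (v : V) : Prop :=
  ∃! w, T.Adj v w

/-- `y` is the parent of `x` in the tree `T` rooted at `r`. -/
def IsParent {V : Type*} (T : SimpleGraph V) (r x y : V) : Prop :=
  T.Adj x y ∧ InSubtree T r y x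

/-- `w` is the least common ancestor of `u` and `v` in the tree `T` rooted at `r`. -/
def IsLCA {V : Type*} (T : SimpleGraph V) (r u v w : V) : Prop :=
  w ∈ pathSupport T u v ∧ w ∈ pathSupport T u r ∧ w ∈ pathSupport T v r

/-- The link `cd` is a shadow of the link `ab`: the tree path between `c` and `d` is a
strict subpath of the tree path between `a` and `b`. -/
def IsShadow {V : Type*} (T : SimpleGraph V) (c d a b : V) : Prop :=
  c ≠ d ∧ pathEdges T c d ⊂ pathEdges T a b

/-- The link set `E` is shadow-closed: every shadow of a link of `E` belongs to `E`. -/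
def ShadowClosed {V : Type*} (T : SimpleGraph V) (E : Finset (Sym2 V)) : Prop :=
  ∀ a b c d, s(a, b) ∈ E → IsShadow T c d a b → s(c, d) ∈ E

/-- `F ⊆ E` is a shadows-minimal feasible solution: it is a minimum-cardinality cover of
`T` among subsets of `E`, and replacing any link of `F` by one of its shadows renders it
infeasible. -/
def ShadowsMinimal {V : Type*} (T : SimpleGraph V) (E F : Finset (Sym2 V)) : Prop :=
  F ⊆ E ∧ CoversTree T ↑F ∧
    (∀ F' : Finset (Sym2 V), F' ⊆ E → CoversTree T ↑F' → F.card ≤ F'.card) ∧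
    ∀ a b c d, s(a, b) ∈ F → IsShadow T c d a b →
      ¬ CoversTree T ↑(insert s(c, d) (F.erase s(a, b)))

/-- `deg_F(x)`: the number of links of `F` incident to `x`. -/
noncomputable def degF {V : Type*} (F : Finset (Sym2 V)) (x : V) : ℕ :=
  (F.filter (fun e => x ∈ e)).card

/-- `s` is a stem with twin link `ab`: an internal vertex whose children are exactly the
two leaves `a` and `b`, with `ab ∈ E`. -/
def IsStem {V : Type*} (T : SimpleGraph V) (r : V) (E : Finset (Sym2 V)) (s a b : V) : Prop :=
  a ≠ b ∧ ¬ IsLeaf T s ∧ IsLeaf T a ∧ IsLeaf T b ∧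
    IsParent T r a s ∧ IsParent T r b s ∧
    (∀ x, IsParent T r x s → x = a ∨ x = b) ∧ s(a, b) ∈ E

/-- The subtree `T_v` is `x`-closed: every link of `E` incident to `x` has both endpoints
in `T_v`. -/
def XClosed {V : Type*} (T : SimpleGraph V) (r : V) (E : Finset (Sym2 V)) (v x : V) : Prop :=
  ∀ l ∈ E, x ∈ l → ∀ y ∈ l, InSubtree T r v y

/-- The subtree `T_v` is leaf-closed: it is `x`-closed for every leaf `x ∈ L_v`. -/
def LeafClosed {V : Type*} (T : SimpleGraph V) (r : V) (E : Finset (Sym2 V)) (v : V) : Prop :=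
  ∀ x, IsLeaf T x → InSubtree T r v x → XClosed T r E v x

/-- The subtree `T_v` is minimally leaf-closed: it is leaf-closed and no subtree rooted
at a strict descendant of `v` is leaf-closed. -/
def MinLeafClosed {V : Type*} (T : SimpleGraph V) (r : V) (E : Finset (Sym2 V)) (v : V) : Prop :=
  LeafClosed T r E v ∧ ∀ u, InSubtree T r v u → u ≠ v → ¬ LeafClosed T r E u

/-- `ax` is an up-link of the leaf `a`: a link of `E` incident to `a` whose least common
ancestor with `a` is closest to the root among all links of `E` incident to `a`. -/
def IsUpLink {V : Type*} (T : SimpleGraph V) (r : V) (E : Finset (Sym2 V)) (a x : V) : Prop :=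
  s(a, x) ∈ E ∧ ∀ y w w', s(a, y) ∈ E → IsLCA T r a x w → IsLCA T r a y w' →
    T.dist w r ≤ T.dist w' r

/-- A matching: a set of links (pairs of distinct vertices) no two of which share an
endpoint. -/
def IsMatching {V : Type*} (M : Finset (Sym2 V)) : Prop :=
  (∀ l ∈ M, ¬ l.IsDiag) ∧ ∀ l ∈ M, ∀ l' ∈ M, l ≠ l' → ∀ x, x ∈ l → x ∉ l'

section TAPHelpers

open SimpleGraph

variable {V : Type*} {T : SimpleGraph V}

private lemma path_eq (hT : T.IsTree) {u w : V} {p q : T.Walk u w} (hp : p.IsPath)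
    (hq : q.IsPath) : p = q := by
  obtain ⟨p₀, -, hu⟩ := hT.existsUnique_path u w
  rw [hu p hp, hu q hq]

private lemma exists_path (hT : T.IsTree) (u w : V) : ∃ p : T.Walk u w, p.IsPath :=
  (hT.existsUnique_path u w).exists

private lemma pathEdges_eq (hT : T.IsTree) {u w : V} {p : T.Walk u w} (hp : p.IsPath) :
    pathEdges T u w = {e | e ∈ p.edges} := by
  ext e
  constructor
  · rintro ⟨q, hq, he⟩
    rwa [path_eq hT hp hq]
  · intro he
    exact ⟨p, hp, he⟩

private lemma pathEdges_symm (hT : T.IsTree) (u w : V) : pathEdges T u w = pathEdges T w u := by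
  ext e
  constructor <;> rintro ⟨q, hq, he⟩ <;>
    exact ⟨q.reverse, hq.reverse, by simpa [SimpleGraph.Walk.edges_reverse] using he⟩

private lemma walk_from_leaf {x y t : V} (hy : ∀ z, T.Adj x z → z = y) (p : T.Walk x t)
    (hne : x ≠ t) : y ∈ p.support.tail := by
  cases p with
  | nil => exact absurd rfl hne
  | cons h q =>
    obtain rfl := hy _ h
    simpa using q.start_mem_support

private lemma append_path_disjoint {u w t : V} {x : V} {p : T.Walk u w} {q : T.Walk w t}
    (h : (p.append q).IsPath) (hx1 : x ∈ p.support) (hx2 : x ∈ q.support.tail) : False := by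
  have hn := h.support_nodup
  rw [SimpleGraph.Walk.support_append, List.nodup_append] at hn
  exact hn.2.2 x hx1 x hx2 rfl

private lemma leaf_not_interior (hT : T.IsTree) {x u w : V} (hx : IsLeaf T x) {p : T.Walk u w}
    (hp : p.IsPath) (hxp : x ∈ p.support) (hxu : x ≠ u) (hxw : x ≠ w) : False := by
  classical
  obtain ⟨y, -, hy⟩ := hx
  have happ : ((p.takeUntil x hxp).append (p.dropUntil x hxp)).IsPath := by
    rwa [p.take_spec hxp]
  have h2 : y ∈ (p.dropUntil x hxp).support.tail := walk_from_leaf hy _ hxw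
  have h1 : y ∈ (p.takeUntil x hxp).support := by
    have h3 := walk_from_leaf hy (p.takeUntil x hxp).reverse hxu
    have h4 : y ∈ (p.takeUntil x hxp).reverse.support := List.mem_of_mem_tail h3
    rwa [SimpleGraph.Walk.support_reverse, List.mem_reverse] at h4
  exact append_path_disjoint happ h1 h2

private lemma leaf_mem_pathEdges (hT : T.IsTree) {x u w : V} (hx : IsLeaf T x) {e : Sym2 V}
    (he : e ∈ pathEdges T u w) (hxe : x ∈ e) : x = u ∨ x = w := by
  obtain ⟨p, hp, hep⟩ := he
  obtain ⟨y, rfl⟩ := Sym2.mem_iff_exists.mp hxe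
  have hxs : x ∈ p.support := p.fst_mem_support_of_mem_edges hep
  by_contra hcon
  push_neg at hcon
  exact leaf_not_interior hT hx hp hxs hcon.1 hcon.2

private lemma path_first_edge {v w t : V} {p : T.Walk v t} (hp : p.IsPath) (hvw : v ≠ w)
    (he : s(v, w) ∈ p.edges) :
    ∃ q : T.Walk w t, q.IsPath ∧ v ∉ q.support ∧ p.support = v :: q.support := by
  cases p with
  | nil => simp at he
  | cons h q =>
    rw [SimpleGraph.Walk.edges_cons, List.mem_cons] at he
    rcases he with he | he
    · rcases Sym2.eq_iff.mp he with ⟨-, h2⟩ | ⟨-, h2⟩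
      · subst h2
        have h' := (SimpleGraph.Walk.cons_isPath_iff h q).mp hp
        exact ⟨q, h'.1, h'.2, by simp⟩
      · exact absurd h2 hvw.symm
    · exact absurd (q.fst_mem_support_of_mem_edges he)
        ((SimpleGraph.Walk.cons_isPath_iff h q).mp hp).2

private lemma not_inSubtree_of_cross (hT : T.IsTree) {r v pv u2 : V} (hadj : T.Adj v pv)
    {q : T.Walk pv r} (hq : q.IsPath) (hvq : v ∉ q.support)
    {p2 : T.Walk v u2} (hp2 : p2.IsPath) (he : s(v, pv) ∈ p2.edges) :
    ¬ InSubtree T r v u2 := by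
  classical
  rintro ⟨P, hP, hvP⟩
  have happ : ((P.takeUntil v hvP).append (P.dropUntil v hvP)).IsPath := by
    rwa [P.take_spec hvP]
  have hC : (SimpleGraph.Walk.cons hadj q).IsPath :=
    (SimpleGraph.Walk.cons_isPath_iff hadj q).mpr ⟨hq, hvq⟩
  have hP2C : P.dropUntil v hvP = SimpleGraph.Walk.cons hadj q :=
    path_eq hT (hP.dropUntil hvP) hC
  have h2 : pv ∈ (P.dropUntil v hvP).support.tail := by
    rw [hP2C]
    simpa using q.start_mem_support
  have hrev : (P.takeUntil v hvP).reverse = p2 := path_eq hT (hP.takeUntil hvP).reverse hp2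
  have h1 : pv ∈ (P.takeUntil v hvP).support := by
    have h3 : pv ∈ p2.support := p2.snd_mem_support_of_mem_edges he
    rw [← hrev, SimpleGraph.Walk.support_reverse, List.mem_reverse] at h3
    exact h3
  exact append_path_disjoint happ h1 h2

private lemma inSubtree_of_side (hT : T.IsTree) {r v pv u1 : V} (hadj : T.Adj v pv)
    {q : T.Walk pv r} (hq : q.IsPath) (hvq : v ∉ q.support)
    {p1 : T.Walk u1 v} (hp1 : p1.IsPath) (hpv1 : pv ∉ p1.support) :
    InSubtree T r v u1 := by
  classical
  have hdisj : ∀ t ∈ p1.support, t ∈ q.support → False := by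
    intro t ht1 ht2
    have hD1 : (p1.dropUntil t ht1).IsPath := hp1.dropUntil ht1
    have hD2' : (SimpleGraph.Walk.cons hadj (q.takeUntil t ht2)).IsPath :=
      (SimpleGraph.Walk.cons_isPath_iff _ _).mpr
        ⟨hq.takeUntil ht2, fun hvm => hvq (q.support_takeUntil_subset ht2 hvm)⟩
    have heq : p1.dropUntil t ht1 = (SimpleGraph.Walk.cons hadj (q.takeUntil t ht2)).reverse :=
      path_eq hT hD1 hD2'.reverse
    have hpvin : pv ∈ (SimpleGraph.Walk.cons hadj (q.takeUntil t ht2)).reverse.support := by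
      rw [SimpleGraph.Walk.support_reverse, List.mem_reverse]
      simpa using (q.takeUntil t ht2).start_mem_support
    rw [← heq] at hpvin
    exact hpv1 (p1.support_dropUntil_subset ht1 hpvin)
  have hW : (p1.append (SimpleGraph.Walk.cons hadj q)).IsPath := by
    rw [SimpleGraph.Walk.isPath_def, SimpleGraph.Walk.support_append]
    refine List.Nodup.append hp1.support_nodup ?_ ?_
    · simpa using hq.support_nodup
    · intro t ht1 ht2
      simp only [SimpleGraph.Walk.support_cons, List.tail_cons] at ht2
      exact hdisj t ht1 ht2
  exact ⟨p1.append (SimpleGraph.Walk.cons hadj q), hW, by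
    rw [SimpleGraph.Walk.mem_support_append_iff]
    exact Or.inl p1.end_mem_support⟩

private lemma cross_edge (hT : T.IsTree) {r v pv : V} (hadj : T.Adj v pv)
    {q : T.Walk pv r} (hq : q.IsPath) (hvq : v ∉ q.support)
    {u1 u2 : V} (he : s(v, pv) ∈ pathEdges T u1 u2) :
    (InSubtree T r v u1 ∧ ¬ InSubtree T r v u2) ∨
      (InSubtree T r v u2 ∧ ¬ InSubtree T r v u1) := by
  classical
  obtain ⟨p, hp, hep⟩ := he
  have hvs : v ∈ p.support := p.fst_mem_support_of_mem_edges hep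
  have happ : ((p.takeUntil v hvs).append (p.dropUntil v hvs)).IsPath := by
    rwa [p.take_spec hvs]
  have hsplit : s(v, pv) ∈ (p.takeUntil v hvs).edges ∨ s(v, pv) ∈ (p.dropUntil v hvs).edges := by
    rw [← List.mem_append, ← SimpleGraph.Walk.edges_append, p.take_spec hvs]
    exact hep
  rcases hsplit with he1 | he2
  · have hp1 := hp.takeUntil hvs
    have he1r : s(v, pv) ∈ (p.takeUntil v hvs).reverse.edges := by
      rwa [SimpleGraph.Walk.edges_reverse, List.mem_reverse]
    have hn1 : ¬ InSubtree T r v u1 := not_inSubtree_of_cross hT hadj hq hvq hp1.reverse he1r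
    have hpvp1 : pv ∈ (p.takeUntil v hvs).support :=
      (p.takeUntil v hvs).snd_mem_support_of_mem_edges he1
    have hpv2 : pv ∉ (p.dropUntil v hvs).support := by
      intro hmem
      rw [SimpleGraph.Walk.support_eq_cons] at hmem
      rcases List.mem_cons.mp hmem with h' | h'
      · exact hadj.ne' h'
      · exact append_path_disjoint happ hpvp1 h'
    have hi2 : InSubtree T r v u2 := by
      refine inSubtree_of_side hT hadj hq hvq (hp.dropUntil hvs).reverse ?_
      rwa [SimpleGraph.Walk.support_reverse, List.mem_reverse]
    exact Or.inr ⟨hi2, hn1⟩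
  · have hp2 := hp.dropUntil hvs
    have hn2 : ¬ InSubtree T r v u2 := not_inSubtree_of_cross hT hadj hq hvq hp2 he2
    obtain ⟨q2, hq2, hvq2, hsupp⟩ := path_first_edge hp2 hadj.ne he2
    have hpv1 : pv ∉ (p.takeUntil v hvs).support := by
      intro hmem
      apply append_path_disjoint happ hmem
      rw [hsupp]
      simpa using q2.start_mem_support
    exact Or.inl ⟨inSubtree_of_side hT hadj hq hvq (hp.takeUntil hvs) hpv1, hn2⟩

private lemma exists_parent (hT : T.IsTree) {v r : V} (hvr : v ≠ r) :
    ∃ pv, T.Adj v pv ∧ ∃ q : T.Walk pv r, q.IsPath ∧ v ∉ q.support := by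
  obtain ⟨p, hp⟩ := exists_path hT v r
  cases p with
  | nil => exact absurd rfl hvr
  | cons h q =>
    have h' := (SimpleGraph.Walk.cons_isPath_iff h q).mp hp
    exact ⟨_, h, q, h'.1, h'.2⟩

private lemma leaf_link (hT : T.IsTree) {E F : Finset (Sym2 V)} (hFE : F ⊆ E)
    (hlinks : ∀ l ∈ E, ¬ l.IsDiag) (hcov : CoversTree T ↑F) {x : V} (hx : IsLeaf T x) :
    ∃ z, s(x, z) ∈ F ∧ x ≠ z := by
  obtain ⟨y, hy, -⟩ := id hx
  obtain ⟨l, hlF, hcovl⟩ := hcov s(x, y) (T.mem_edgeSet.mpr hy)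
  obtain ⟨u', w', hleq, hmem⟩ := hcovl
  have hlF' : l ∈ F := hlF
  have hx' : x = u' ∨ x = w' := leaf_mem_pathEdges hT hx hmem (by simp)
  have hnd := hlinks l (hFE hlF')
  rcases hx' with rfl | rfl
  · refine ⟨w', by rwa [← hleq], fun hh => ?_⟩
    apply hnd
    rw [hleq, ← hh]
    exact Sym2.mk_isDiag_iff.mpr rfl
  · refine ⟨u', by rw [Sym2.eq_swap]; rwa [← hleq], fun hh => ?_⟩
    apply hnd
    rw [hleq, ← hh]
    exact Sym2.mk_isDiag_iff.mpr rfl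

end TAPHelpers

section TAPShadow

open SimpleGraph

variable {V : Type*} {T : SimpleGraph V}

private lemma no_other_link (hT : T.IsTree) {E F : Finset (Sym2 V)}
    (hF : ShadowsMinimal T E F) {a b sx : V}
    (ha : IsLeaf T a) (has : T.Adj a sx) (hbs : T.Adj b sx) (hab : a ≠ b)
    (habF : s(a, b) ∈ F) {y : V} (hya : y ≠ a) (hyb : y ≠ b) (hys : y ≠ sx)
    (hyF : s(a, y) ∈ F) : False := by
  classical
  obtain ⟨q, hq⟩ := exists_path hT sx y
  have haq : a ∉ q.support := fun hmem =>
    leaf_not_interior hT ha hq hmem has.ne (fun hh => hya hh.symm)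
  have hp : (SimpleGraph.Walk.cons has q).IsPath :=
    (SimpleGraph.Walk.cons_isPath_iff has q).mpr ⟨hq, haq⟩
  · have hpe : pathEdges T a y = {e | e ∈ s(a, sx) :: q.edges} := by
      simpa using pathEdges_eq hT hp
    have hpe2 : pathEdges T sx y = {e | e ∈ q.edges} := pathEdges_eq hT hq
    have hshadow : IsShadow T sx y a y := by
      refine ⟨fun hh => hys hh.symm, ?_⟩
      rw [hpe, hpe2, Set.ssubset_def]
      constructor
      · intro e hee
        exact List.mem_cons_of_mem _ hee
      · intro hsub
        have h1 : s(a, sx) ∈ {e | e ∈ q.edges} := hsub List.mem_cons_self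
        have h2 : a = sx ∨ a = y :=
          leaf_mem_pathEdges hT ha (by rw [hpe2]; exact h1) (by simp)
        rcases h2 with h2 | h2
        · exact has.ne h2
        · exact hya h2.symm
    refine hF.2.2.2 a y sx y hyF hshadow ?_
    intro e heT
    obtain ⟨l, hlF, hcovl⟩ := hF.2.1 e heT
    by_cases hl : l = s(a, y)
    · obtain ⟨u', w', hleq, hmem⟩ := hcovl
      have hmem' : e ∈ pathEdges T a y := by
        rcases Sym2.eq_iff.mp (hl ▸ hleq : s(a, y) = s(u', w')) with ⟨h1, h2⟩ | ⟨h1, h2⟩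
        · rw [h1, h2]; exact hmem
        · rw [pathEdges_symm hT, h1, h2]; exact hmem
      rw [hpe] at hmem'
      rcases List.mem_cons.mp hmem' with rfl | hmem2
      · refine ⟨s(a, b), ?_, a, b, rfl, ?_⟩
        · refine Finset.mem_coe.mpr (Finset.mem_insert_of_mem (Finset.mem_erase.mpr ⟨?_, habF⟩))
          intro hh
          rcases Sym2.eq_iff.mp hh with ⟨-, h2⟩ | ⟨h1, -⟩
          · exact hyb h2.symm
          · exact hya h1.symm
        · have hw2 : (SimpleGraph.Walk.cons has (SimpleGraph.Walk.cons hbs.symm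
              SimpleGraph.Walk.nil)).IsPath := by
            simp [SimpleGraph.Walk.isPath_def, has.ne, hab, hbs.ne']
          rw [pathEdges_eq hT hw2]
          simp
      · exact ⟨s(sx, y), Finset.mem_coe.mpr (Finset.mem_insert_self _ _), sx, y, rfl, by
          rw [hpe2]; exact hmem2⟩
    · exact ⟨l, Finset.mem_coe.mpr (Finset.mem_insert_of_mem
        (Finset.mem_erase.mpr ⟨hl, Finset.mem_coe.mp hlF⟩)), hcovl⟩

end TAPShadow

/-- if `T_v` (`v ≠ r`) has exactly four leaves `a, b, c, d`, where `a, b`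
are the children of a stem `s ∈ T_v` with twin link `ab`, `T_v` is `c`-closed and
`d`-closed, and `cd ∉ E`, then `ab ∈ F` implies `Σ_{x ∈ T_v ∖ L} deg_F(x) ≥ 3`. -/
theorem statement8 {V : Type*} [Fintype V] (T : SimpleGraph V) (hT : T.IsTree) (r : V)
    (hr : ¬ IsLeaf T r) (E F : Finset (Sym2 V))
    (hlinks : ∀ l ∈ E, ¬ l.IsDiag)
    (hE : ShadowClosed T E)
    (hF : ShadowsMinimal T E F)
    (v : V) (hv : v ≠ r) (a b c d s : V)
    (hab : a ≠ b) (hac : a ≠ c) (had : a ≠ d) (hbc : b ≠ c) (hbd : b ≠ d) (hcd : c ≠ d)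
    (hleaves : ∀ x, (IsLeaf T x ∧ InSubtree T r v x) ↔ (x = a ∨ x = b ∨ x = c ∨ x = d))
    (hstem : IsStem T r E s a b) (hsv : InSubtree T r v s)
    (hclosedc : XClosed T r E v c) (hclosedd : XClosed T r E v d)
    (hcdE : s(c, d) ∉ E) :
    s(a, b) ∈ F →
      3 ≤ ∑ x : V, (if InSubtree T r v x ∧ ¬ IsLeaf T x then degF F x else 0) := by
  classical
  intro habF
  obtain ⟨-, hsleaf, haleaf, hbleaf, ⟨haS, -⟩, ⟨hbS, -⟩, -, -⟩ := hstem
  have hFE : F ⊆ E := hF.1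
  have hcov : CoversTree T ↑F := hF.2.1
  -- leaves are in the subtree
  have hain : InSubtree T r v a := ((hleaves a).mpr (Or.inl rfl)).2
  have hbin : InSubtree T r v b := ((hleaves b).mpr (Or.inr (Or.inl rfl))).2
  have hcin : InSubtree T r v c := ((hleaves c).mpr (Or.inr (Or.inr (Or.inl rfl)))).2
  have hdin : InSubtree T r v d := ((hleaves d).mpr (Or.inr (Or.inr (Or.inr rfl)))).2
  have hcleaf : IsLeaf T c := ((hleaves c).mpr (Or.inr (Or.inr (Or.inl rfl)))).1
  have hdleaf : IsLeaf T d := ((hleaves d).mpr (Or.inr (Or.inr (Or.inr rfl)))).1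
  have hbaF : s(b, a) ∈ F := by rwa [Sym2.eq_swap]
  -- no link of F at a besides the twin link, same for b
  have hnoa : ∀ y, y ≠ a → y ≠ b → y ≠ s → s(a, y) ∉ F := fun y h1 h2 h3 hy =>
    no_other_link hT hF haleaf haS hbS hab habF h1 h2 h3 hy
  have hnob : ∀ y, y ≠ b → y ≠ a → y ≠ s → s(b, y) ∉ F := fun y h1 h2 h3 hy =>
    no_other_link hT hF hbleaf hbS haS hab.symm hbaF h1 h2 h3 hy
  have hcs : c ≠ s := fun h => hsleaf (h ▸ hcleaf)
  have hds : d ≠ s := fun h => hsleaf (h ▸ hdleaf)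
  -- the link at c
  obtain ⟨z1, hz1F, hcz1⟩ := leaf_link hT hFE hlinks hcov hcleaf
  have hz1in : InSubtree T r v z1 :=
    hclosedc s(c, z1) (hFE hz1F) (by simp) z1 (by simp)
  have hz1a : z1 ≠ a := by
    rintro rfl
    exact hnoa c hac.symm hbc.symm hcs (by rwa [Sym2.eq_swap])
  have hz1b : z1 ≠ b := by
    rintro rfl
    exact hnob c hbc.symm hac.symm hcs (by rwa [Sym2.eq_swap])
  have hz1d : z1 ≠ d := by
    rintro rfl
    exact hcdE (hFE hz1F)
  have hz1leaf : ¬ IsLeaf T z1 := by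
    intro hl
    rcases (hleaves z1).mp ⟨hl, hz1in⟩ with h | h | h | h
    · exact hz1a h
    · exact hz1b h
    · exact hcz1 h.symm
    · exact hz1d h
  -- the link at d
  obtain ⟨z2, hz2F, hdz2⟩ := leaf_link hT hFE hlinks hcov hdleaf
  have hz2in : InSubtree T r v z2 :=
    hclosedd s(d, z2) (hFE hz2F) (by simp) z2 (by simp)
  have hz2a : z2 ≠ a := by
    rintro rfl
    exact hnoa d had.symm hbd.symm hds (by rwa [Sym2.eq_swap])
  have hz2b : z2 ≠ b := by
    rintro rfl
    exact hnob d hbd.symm had.symm hds (by rwa [Sym2.eq_swap])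
  have hz2c : z2 ≠ c := by
    intro h
    apply hcdE
    have h2 : s(d, z2) ∈ E := hFE hz2F
    rwa [h, Sym2.eq_swap] at h2
  have hz2leaf : ¬ IsLeaf T z2 := by
    intro hl
    rcases (hleaves z2).mp ⟨hl, hz2in⟩ with h | h | h | h
    · exact hz2a h
    · exact hz2b h
    · exact hz2c h
    · exact hdz2 h.symm
  -- the link crossing the edge above v
  obtain ⟨pv, hadj, q, hq, hvq⟩ := exists_parent hT hv
  obtain ⟨l0, hl0F, hcovl0⟩ := hcov s(v, pv) (T.mem_edgeSet.mpr hadj)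
  have hl0F' : l0 ∈ F := hl0F
  obtain ⟨u1, u2, hl0eq, hl0mem⟩ := hcovl0
  have hcross := cross_edge hT hadj hq hvq hl0mem
  have hkey : ∃ w wo, l0 = s(w, wo) ∧ InSubtree T r v w ∧ ¬ InSubtree T r v wo := by
    rcases hcross with ⟨h1, h2⟩ | ⟨h1, h2⟩
    · exact ⟨u1, u2, hl0eq, h1, h2⟩
    · exact ⟨u2, u1, by rw [hl0eq, Sym2.eq_swap], h1, h2⟩
  obtain ⟨w, wo, hweq, hwin, hwoout⟩ := hkey
  have hwwo : w ≠ wo := by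
    intro h
    exact hlinks l0 (hFE hl0F') (by rw [hweq, ← h]; exact Sym2.mk_isDiag_iff.mpr rfl)
  have hwF : s(w, wo) ∈ F := hweq ▸ hl0F'
  have hwc : w ≠ c := by
    rintro rfl
    exact hwoout (hclosedc s(w, wo) (hFE hwF) (by simp) wo (by simp))
  have hwd : w ≠ d := by
    rintro rfl
    exact hwoout (hclosedd s(w, wo) (hFE hwF) (by simp) wo (by simp))
  have hwa : w ≠ a := by
    rintro rfl
    exact hnoa wo hwwo.symm (fun h => hwoout (h ▸ hbin)) (fun h => hwoout (h ▸ hsv)) hwF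
  have hwb : w ≠ b := by
    rintro rfl
    exact hnob wo hwwo.symm (fun h => hwoout (h ▸ hain)) (fun h => hwoout (h ▸ hsv)) hwF
  have hwleaf : ¬ IsLeaf T w := by
    intro hl
    rcases (hleaves w).mp ⟨hl, hwin⟩ with h | h | h | h
    · exact hwa h
    · exact hwb h
    · exact hwc h
    · exact hwd h
  -- the three distinct links
  set S : Finset (Sym2 V) := {s(c, z1), s(d, z2), s(w, wo)} with hS
  have hdist1 : s(c, z1) ≠ s(d, z2) := by
    intro h
    have : (d : V) ∈ s(c, z1) := h ▸ (by simp : (d : V) ∈ s(d, z2))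
    rcases Sym2.mem_iff.mp this with h' | h'
    · exact hcd h'.symm
    · exact hz1d h'.symm
  have hz1in' : InSubtree T r v z1 := hz1in
  have hdist2 : s(c, z1) ≠ s(w, wo) := by
    intro h
    have : (wo : V) ∈ s(c, z1) := h ▸ (by simp : (wo : V) ∈ s(w, wo))
    rcases Sym2.mem_iff.mp this with h' | h'
    · exact hwoout (h' ▸ hcin)
    · exact hwoout (h' ▸ hz1in)
  have hdist3 : s(d, z2) ≠ s(w, wo) := by
    intro h
    have : (wo : V) ∈ s(d, z2) := h ▸ (by simp : (wo : V) ∈ s(w, wo))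
    rcases Sym2.mem_iff.mp this with h' | h'
    · exact hwoout (h' ▸ hdin)
    · exact hwoout (h' ▸ hz2in)
  have hScard : S.card = 3 := by
    rw [hS, Finset.card_insert_of_notMem (by simp [hdist1, hdist2]),
      Finset.card_insert_of_notMem (by simp [hdist3]), Finset.card_singleton]
  have hSF : S ⊆ F := by
    intro l hl
    rcases Finset.mem_insert.mp hl with rfl | hl
    · exact hz1F
    · rcases Finset.mem_insert.mp hl with rfl | hl
      · exact hz2F
      · rw [Finset.mem_singleton.mp hl]
        exact hwF
  have hwit : ∀ l ∈ S, ∃ x, (InSubtree T r v x ∧ ¬ IsLeaf T x) ∧ x ∈ l := by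
    intro l hl
    rcases Finset.mem_insert.mp hl with rfl | hl
    · exact ⟨z1, ⟨hz1in, hz1leaf⟩, by simp⟩
    · rcases Finset.mem_insert.mp hl with rfl | hl
      · exact ⟨z2, ⟨hz2in, hz2leaf⟩, by simp⟩
      · rw [Finset.mem_singleton.mp hl]
        exact ⟨w, ⟨hwin, hwleaf⟩, by simp⟩
  -- counting
  calc (3 : ℕ) = ∑ _l ∈ S, 1 := by simp [Finset.sum_const, hScard]
    _ ≤ ∑ l ∈ S, ∑ x : V,
        (if (InSubtree T r v x ∧ ¬ IsLeaf T x) ∧ x ∈ l then 1 else 0) := by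
      refine Finset.sum_le_sum fun l hl => ?_
      obtain ⟨x0, hx0P, hx0l⟩ := hwit l hl
      have h1 : (if (InSubtree T r v x0 ∧ ¬ IsLeaf T x0) ∧ x0 ∈ l then 1 else 0) = 1 := by
        simp [hx0P, hx0l]
      calc (1 : ℕ) = _ := h1.symm
        _ ≤ _ := Finset.single_le_sum
          (f := fun x => if (InSubtree T r v x ∧ ¬ IsLeaf T x) ∧ x ∈ l then 1 else 0)
          (fun i _ => Nat.zero_le _) (Finset.mem_univ x0)
    _ = ∑ x : V, ∑ l ∈ S,
        (if (InSubtree T r v x ∧ ¬ IsLeaf T x) ∧ x ∈ l then 1 else 0) := Finset.sum_comm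
    _ = ∑ x : V, (if InSubtree T r v x ∧ ¬ IsLeaf T x then
        (S.filter (fun l => x ∈ l)).card else 0) := by
      refine Finset.sum_congr rfl fun x _ => ?_
      by_cases hP : InSubtree T r v x ∧ ¬ IsLeaf T x
      · rw [if_pos hP, Finset.card_filter]
        exact Finset.sum_congr rfl fun l _ => by rw [if_congr (and_iff_right hP) rfl rfl]
      · simp [hP]
    _ ≤ ∑ x : V, (if InSubtree T r v x ∧ ¬ IsLeaf T x then degF F x else 0) := by
      refine Finset.sum_le_sum fun x _ => ?_
      by_cases hP : InSubtree T r v x ∧ ¬ IsLeaf T x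
      · simp only [hP, if_true]
        unfold degF
        exact Finset.card_le_card (Finset.filter_subset_filter _ hSF)
      · simp [hP]
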